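/- Let μ be an atomless (diffuse) probability measure on ℝ with cumulative distribution function F(x) = μ((−∞, x]). For k ≥ 1 define the Rademacher function r̃_k : ℝ → ℝ by r̃_k(t) = Σ_{j=0}^{2^k−1} (−1)^j · 1_{(j·2^{−k}, (j+1)·2^{−k}]}(t). Then the sequence (r̃_k ∘ F)_{k≥1} is a mutually independent sequence of random variables on the probability space (ℝ, B(ℝ), μ); moreover for every k ≥ 1 and every ε ∈ {−1, 1}, μ({x : r̃_k(F(x)) = ε}) = 1/2. -/

import Mathlib

open MeasureTheory Set Filter Topology

set_option linter.unusedSectionVars false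



lemma cdf_level (μ : Measure ℝ) [IsProbabilityMeasure μ]
    (hdiff : ∀ x : ℝ, μ {x} = 0)
    (F : ℝ → ℝ) (hF : ∀ x, F x = (μ (Set.Iic x)).toReal)
    {a : ℝ} (ha0 : 0 ≤ a) (ha1 : a ≤ 1) :
    μ {x | F x ≤ a} = ENNReal.ofReal a := by
  have hFc : F = ProbabilityTheory.cdf μ := funext fun x => by
    rw [hF, ProbabilityTheory.cdf_eq_real, measureReal_def]
  have hofReal : ∀ x, ENNReal.ofReal (F x) = μ (Set.Iic x) := fun x => by
    rw [hFc]; exact ProbabilityTheory.ofReal_cdf μ x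
  have hmono : Monotone F := by rw [hFc]; exact ProbabilityTheory.monotone_cdf μ
  set A := {x | F x ≤ a} with hA
  by_cases hne : A.Nonempty
  · by_cases hbd : BddAbove A
    · set c := sSup A with hc
      have hsub1 : Set.Iio c ⊆ A := fun x hx => by
        obtain ⟨y, hy, hxy⟩ := exists_lt_of_lt_csSup hne hx
        exact le_trans (hmono hxy.le) hy
      have hsub2 : A ⊆ Set.Iic c := fun x hx => le_csSup hbd hx
      have hio : μ (Set.Iio c) = μ (Set.Iic c) := by
        refine le_antisymm (measure_mono Set.Iio_subset_Iic_self) ?_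
        calc μ (Set.Iic c) = μ (Set.Iio c ∪ {c}) := by rw [Set.Iio_union_right]
        _ ≤ μ (Set.Iio c) + μ {c} := measure_union_le _ _
        _ = μ (Set.Iio c) := by rw [hdiff c, add_zero]
      have hμA : μ A = μ (Set.Iic c) := by
        refine le_antisymm (measure_mono hsub2) ?_
        rw [← hio]; exact measure_mono hsub1
      rw [hμA]
      have hge : ENNReal.ofReal a ≤ μ (Set.Iic c) := by
        have hanti : Antitone (fun n : ℕ => Set.Iic (c + 1/(n+1))) := by
          intro m n hmn
          apply Set.Iic_subset_Iic.2
          have hc1 : (m:ℝ) ≤ n := Nat.cast_le.2 hmn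
          have : (1:ℝ)/(n+1) ≤ 1/(m+1) := by
            apply one_div_le_one_div_of_le <;> linarith
          linarith
        have hInter : (⋂ n : ℕ, Set.Iic (c + 1/(n+1))) = Set.Iic c := by
          ext x
          simp only [Set.mem_iInter, Set.mem_Iic]
          constructor
          · intro h
            by_contra hx
            push_neg at hx
            obtain ⟨n, hn⟩ := exists_nat_one_div_lt (by linarith : (0:ℝ) < x - c)
            have := h n
            linarith
          · intro h n
            have : (0:ℝ) < 1/(n+1) := by positivity
            linarith
        have htendsto := MeasureTheory.tendsto_measure_iInter_atTop
          (s := fun n : ℕ => Set.Iic (c + 1/((n:ℝ)+1)))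
          (fun n => measurableSet_Iic.nullMeasurableSet)
          hanti ⟨0, measure_ne_top μ _⟩
        rw [hInter] at htendsto
        refine ge_of_tendsto' htendsto fun n => ?_
        show ENNReal.ofReal a ≤ μ (Set.Iic (c + 1/((n:ℝ)+1)))
        have hnot : c + 1/(n+1) ∉ A := by
          intro hmem
          have := le_csSup hbd hmem
          have hpos : (0:ℝ) < 1/(n+1) := by positivity
          linarith
        have : a < F (c + 1/(n+1)) := lt_of_not_ge hnot
        rw [← hofReal]
        exact ENNReal.ofReal_le_ofReal this.le
      have hle : μ (Set.Iic c) ≤ ENNReal.ofReal a := by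
        by_cases hcA : c ∈ A
        · rw [← hofReal]
          exact ENNReal.ofReal_le_ofReal hcA
        · have hAeq : μ (Set.Iic c) = μ (Set.Iio c) := hio.symm
          rw [hAeq]
          have hUnion : Set.Iio c = ⋃ n : ℕ, Set.Iic (c - 1/(n+1)) := by
            ext x
            simp only [Set.mem_iUnion, Set.mem_Iic, Set.mem_Iio]
            constructor
            · intro h
              obtain ⟨n, hn⟩ := exists_nat_one_div_lt (by linarith : (0:ℝ) < c - x)
              exact ⟨n, by linarith⟩
            · rintro ⟨n, hn⟩
              have : (0:ℝ) < 1/(n+1) := by positivity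
              linarith
          rw [hUnion]
          rw [Directed.measure_iUnion]
          · refine iSup_le fun n => ?_
            have hmem : c - 1/(n+1) ∈ A := by
              apply hsub1
              simp only [Set.mem_Iio]
              have : (0:ℝ) < 1/(n+1) := by positivity
              linarith
            rw [← hofReal]
            exact ENNReal.ofReal_le_ofReal hmem
          · have hmono2 : Monotone (fun n : ℕ => Set.Iic (c - 1/((n:ℝ)+1))) := by
              intro m n hmn
              apply Set.Iic_subset_Iic.2
              have hc1 : (m:ℝ) ≤ n := Nat.cast_le.2 hmn
              have : (1:ℝ)/(n+1) ≤ 1/(m+1) := by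
                apply one_div_le_one_div_of_le <;> linarith
              linarith
            exact hmono2.directed_le
      exact le_antisymm hle hge
    · have hall : ∀ x, F x ≤ a := by
        intro x
        rw [not_bddAbove_iff] at hbd
        obtain ⟨y, hy, hxy⟩ := hbd x
        exact le_trans (hmono hxy.le) hy
      have h1a : (1:ℝ) ≤ a := by
        have ht : Tendsto F atTop (𝓝 1) := by rw [hFc]; exact ProbabilityTheory.tendsto_cdf_atTop μ
        exact le_of_tendsto' ht hall
      have ha : a = 1 := le_antisymm ha1 h1a
      have : A = Set.univ := Set.eq_univ_of_forall hall
      rw [this, ha, measure_univ, ENNReal.ofReal_one]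
  · have hall : ∀ x, a < F x := by
      intro x
      by_contra h
      exact hne ⟨x, le_of_not_gt h⟩
    have h0a : a ≤ 0 := by
      have ht : Tendsto F atBot (𝓝 0) := by rw [hFc]; exact ProbabilityTheory.tendsto_cdf_atBot μ
      exact ge_of_tendsto' ht fun x => (hall x).le
    have ha : a = 0 := le_antisymm h0a ha0
    have : A = ∅ := Set.not_nonempty_iff_eq_empty.1 hne
    rw [this, ha, measure_empty, ENNReal.ofReal_zero]



section rade

variable {r : ℕ → ℝ → ℝ}
  (hr : ∀ k t, r k t =
      ∑ j ∈ Finset.range (2 ^ k),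
        (-1 : ℝ) ^ j *
          Set.indicator (Set.Ioc ((j : ℝ) / 2 ^ k) ((j + 1 : ℝ) / 2 ^ k))
            (fun _ => (1 : ℝ)) t)

lemma Ioc_dyadic_uniq {k i j : ℕ} {t : ℝ}
    (hi : t ∈ Set.Ioc ((i : ℝ) / 2 ^ k) ((i + 1 : ℝ) / 2 ^ k))
    (hj : t ∈ Set.Ioc ((j : ℝ) / 2 ^ k) ((j + 1 : ℝ) / 2 ^ k)) : i = j := by
  obtain ⟨hi1, hi2⟩ := hi
  obtain ⟨hj1, hj2⟩ := hj
  by_contra hij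
  have hpow : (0:ℝ) < 2 ^ k := by positivity
  rcases lt_or_gt_of_ne hij with h | h
  · have hc : ((i:ℝ) + 1) ≤ j := by exact_mod_cast h
    have : ((i:ℝ) + 1) / 2 ^ k ≤ (j:ℝ) / 2 ^ k := by gcongr
    linarith
  · have hc : ((j:ℝ) + 1) ≤ i := by exact_mod_cast h
    have : ((j:ℝ) + 1) / 2 ^ k ≤ (i:ℝ) / 2 ^ k := by gcongr
    linarith

include hr

lemma r_eval {k j : ℕ} (hj : j < 2 ^ k) {t : ℝ}
    (ht : t ∈ Set.Ioc ((j : ℝ) / 2 ^ k) ((j + 1 : ℝ) / 2 ^ k)) :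
    r k t = (-1 : ℝ) ^ j := by
  rw [hr]
  rw [Finset.sum_eq_single j]
  · rw [Set.indicator_of_mem ht, mul_one]
  · intro i _ hij
    rw [Set.indicator_of_notMem, mul_zero]
    intro hmem
    exact hij (Ioc_dyadic_uniq hmem ht)
  · intro h
    exact absurd (Finset.mem_range.2 hj) h

lemma r_zero {k : ℕ} {t : ℝ} (ht : t ≤ 0 ∨ 1 < t) : r k t = 0 := by
  rw [hr]
  apply Finset.sum_eq_zero
  intro j hj
  rw [Set.indicator_of_notMem, mul_zero]
  rintro ⟨h1, h2⟩
  have hpow : (0:ℝ) < 2 ^ k := by positivity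
  rcases ht with ht | ht
  · have : (0:ℝ) ≤ (j:ℝ) / 2 ^ k := by positivity
    linarith
  · have hj' : (j:ℝ) + 1 ≤ 2 ^ k := by
      have : j + 1 ≤ 2 ^ k := Finset.mem_range.1 hj
      exact_mod_cast this
    have : ((j:ℝ) + 1) / 2 ^ k ≤ 1 := by
      rw [div_le_one hpow]; exact hj'
    linarith

omit hr

lemma Ioc_dyadic_exists (K : ℕ) {t : ℝ} (h0 : 0 < t) (h1 : t ≤ 1) :
    ∃ j : ℕ, j < 2 ^ K ∧ t ∈ Set.Ioc ((j : ℝ) / 2 ^ K) ((j + 1 : ℝ) / 2 ^ K) := by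
  have hpow : (0:ℝ) < 2 ^ K := by positivity
  have hpos : 0 < t * 2 ^ K := by positivity
  have hn1 : 1 ≤ ⌈t * 2 ^ K⌉₊ := Nat.one_le_iff_ne_zero.2 (by
    simp only [ne_eq, Nat.ceil_eq_zero, not_le]
    exact hpos)
  have hn2 : ⌈t * 2 ^ K⌉₊ ≤ 2 ^ K := by
    rw [Nat.ceil_le]
    have : t * 2 ^ K ≤ 1 * 2 ^ K := by gcongr
    push_cast
    linarith
  have hub := Nat.le_ceil (t * 2 ^ K)
  have hlb := Nat.ceil_lt_add_one hpos.le
  have hp2 : (0:ℕ) < 2 ^ K := Nat.pow_pos (by norm_num)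
  refine ⟨⌈t * 2 ^ K⌉₊ - 1, (Nat.sub_lt (by omega) one_pos).trans_le hn2, ?_, ?_⟩
  · rw [div_lt_iff₀ hpow, Nat.cast_sub hn1]
    push_cast
    linarith
  · rw [le_div_iff₀ hpow, Nat.cast_sub hn1]
    push_cast
    linarith

lemma nat_lt_div_succ_mul (j m : ℕ) (h : 0 < m) : j < (j / m + 1) * m := by
  rw [add_mul, one_mul, mul_comm]
  conv_lhs => rw [← Nat.div_add_mod j m]
  exact Nat.add_lt_add_left (Nat.mod_lt j h) _

lemma Ioc_dyadic_refine {k K j : ℕ} (hk : k ≤ K) (hj : j < 2 ^ K) :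
    j / 2 ^ (K - k) < 2 ^ k ∧
    Set.Ioc ((j : ℝ) / 2 ^ K) ((j + 1 : ℝ) / 2 ^ K) ⊆
      Set.Ioc (((j / 2 ^ (K - k) : ℕ) : ℝ) / 2 ^ k)
        ((((j / 2 ^ (K - k) : ℕ) : ℝ) + 1) / 2 ^ k) := by
  have hmpos : 0 < 2 ^ (K - k) := Nat.pow_pos (by norm_num)
  have h2K : 2 ^ K = 2 ^ k * 2 ^ (K - k) := by rw [← pow_add]; congr 1; omega
  have hile : j / 2 ^ (K - k) * 2 ^ (K - k) ≤ j := Nat.div_mul_le_self _ _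
  have hilt : j < (j / 2 ^ (K - k) + 1) * 2 ^ (K - k) :=
    nat_lt_div_succ_mul j _ hmpos
  constructor
  · apply Nat.div_lt_of_lt_mul
    rw [mul_comm, ← h2K]
    exact hj
  · rintro t ⟨ht1, ht2⟩
    have hpk : (0:ℝ) < 2 ^ k := by positivity
    have hpK : (0:ℝ) < 2 ^ K := by positivity
    have hm0 : ((2 ^ (K - k) : ℕ) : ℝ) ≠ 0 := by positivity
    have hcast : ((2:ℝ)) ^ K = 2 ^ k * ((2 ^ (K - k) : ℕ) : ℝ) := by
      push_cast
      rw [← pow_add]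
      congr 1
      omega
    constructor
    · have h1 : ((j / 2 ^ (K - k) : ℕ) : ℝ) * ((2 ^ (K - k) : ℕ) : ℝ) ≤ (j : ℝ) := by
        exact_mod_cast Nat.cast_le.2 hile
      have h2 : ((j / 2 ^ (K - k) : ℕ) : ℝ) * ((2 ^ (K - k) : ℕ) : ℝ) / 2 ^ K ≤ (j : ℝ) / 2 ^ K := by
        gcongr
      have h3 : ((j / 2 ^ (K - k) : ℕ) : ℝ) * ((2 ^ (K - k) : ℕ) : ℝ) / 2 ^ K
          = ((j / 2 ^ (K - k) : ℕ) : ℝ) / 2 ^ k := by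
        rw [hcast, mul_div_mul_right _ _ hm0]
      linarith
    · have h1 : ((j : ℝ) + 1) ≤ (((j / 2 ^ (K - k) : ℕ) : ℝ) + 1) * ((2 ^ (K - k) : ℕ) : ℝ) := by
        have : (j + 1 : ℕ) ≤ (j / 2 ^ (K - k) + 1) * 2 ^ (K - k) := hilt
        exact_mod_cast this
      have h2 : ((j : ℝ) + 1) / 2 ^ K ≤ (((j / 2 ^ (K - k) : ℕ) : ℝ) + 1) * ((2 ^ (K - k) : ℕ) : ℝ) / 2 ^ K := by
        gcongr
      have h3 : (((j / 2 ^ (K - k) : ℕ) : ℝ) + 1) * ((2 ^ (K - k) : ℕ) : ℝ) / 2 ^ K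
          = (((j / 2 ^ (K - k) : ℕ) : ℝ) + 1) / 2 ^ k := by
        rw [hcast]
        field_simp
      push_cast at h2 h3 ⊢
      linarith

end rade


lemma finFun_symm_val {m n : ℕ} (a : Fin (m ^ n)) (b : Fin n) :
    ((finFunctionFinEquiv.symm a) b : ℕ) = (a : ℕ) / m ^ (b : ℕ) % m := by
  simp [finFunctionFinEquiv]

lemma count_fixed_bits (K : ℕ) (T : Finset (Fin K)) (q : Fin K → Fin 2) :
    ((Finset.range (2 ^ K)).filter
      (fun n => ∀ i ∈ T, n / 2 ^ (i : ℕ) % 2 = (q i : ℕ))).card = 2 ^ (K - T.card) := by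
  classical
  have hcard : ((Finset.univ : Finset (Fin K → Fin 2)).filter
      (fun f => ∀ i ∈ T, f i = q i)).card = 2 ^ (K - T.card) := by
    have heq : (Finset.univ : Finset (Fin K → Fin 2)).filter (fun f => ∀ i ∈ T, f i = q i)
        = Fintype.piFinset (fun i => if i ∈ T then {q i} else Finset.univ) := by
      ext f
      simp only [Finset.mem_filter, Finset.mem_univ, true_and, Fintype.mem_piFinset]
      constructor
      · intro h i
        by_cases hi : i ∈ T
        · simp [hi, h i hi]
        · simp [hi]
      · intro h i hi
        have := h i
        simpa [hi] using this
    rw [heq, Fintype.card_piFinset]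
    rw [← Finset.prod_sdiff (Finset.subset_univ T)]
    have h1 : ∀ i ∈ T, ((if i ∈ T then ({q i} : Finset (Fin 2)) else Finset.univ)).card = 1 := by
      intro i hi; simp [hi]
    have h2 : ∀ i ∈ (Finset.univ \ T : Finset (Fin K)),
        ((if i ∈ T then ({q i} : Finset (Fin 2)) else Finset.univ)).card = 2 := by
      intro i hi
      rw [Finset.mem_sdiff] at hi
      simp [hi.2]
    rw [Finset.prod_congr rfl h1, Finset.prod_congr rfl h2]
    simp only [Finset.prod_const, Finset.prod_const_one, mul_one]
    rw [one_pow, mul_one]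
    congr 1
    rw [Finset.card_sdiff_of_subset (Finset.subset_univ T), Finset.card_univ, Fintype.card_fin]
  rw [← hcard]
  apply Finset.card_bij'
    (i := fun n hn => finFunctionFinEquiv.symm
      ⟨n, Finset.mem_range.1 (Finset.mem_filter.1 hn).1⟩)
    (j := fun f _ => (finFunctionFinEquiv f : ℕ))
  · intro n hn
    rw [Finset.mem_filter]
    refine ⟨Finset.mem_univ _, fun i hi => ?_⟩
    apply Fin.ext
    rw [finFun_symm_val]
    exact (Finset.mem_filter.1 hn).2 i hi
  · intro n hn
    simp
  · intro f hf
    exact finFunctionFinEquiv.symm_apply_apply f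
  · intro f hf
    rw [Finset.mem_filter]
    refine ⟨Finset.mem_range.2 (finFunctionFinEquiv f).isLt, fun i hi => ?_⟩
    have h1 : (finFunctionFinEquiv.symm ⟨(finFunctionFinEquiv f : ℕ),
        (finFunctionFinEquiv f).isLt⟩) = f := by
      rw [Fin.eta]
      exact finFunctionFinEquiv.symm_apply_apply f
    have h2 := finFun_symm_val ⟨(finFunctionFinEquiv f : ℕ), (finFunctionFinEquiv f).isLt⟩ i
    rw [h1] at h2
    rw [← h2]
    exact congrArg _ ((Finset.mem_filter.1 hf).2 i hi)

lemma neg_one_pow_eq_iff_mod (m : ℕ) {e : ℝ} (he : e = -1 ∨ e = 1) :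
    ((-1:ℝ)^m = e) ↔ (m % 2 = if e = 1 then 0 else 1) := by
  rcases Nat.even_or_odd m with hm | hm
  · rw [hm.neg_one_pow]
    rw [Nat.even_iff] at hm
    rcases he with rfl | rfl <;> norm_num [hm]
  · rw [hm.neg_one_pow]
    rw [Nat.odd_iff] at hm
    rcases he with rfl | rfl <;> norm_num [hm]

section main

variable {μ : Measure ℝ} [IsProbabilityMeasure μ]
  (hdiff : ∀ x : ℝ, μ {x} = 0)
  {F : ℝ → ℝ} (hF : ∀ x, F x = (μ (Set.Iic x)).toReal)
  {r : ℕ → ℝ → ℝ}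
  (hr : ∀ k t, r k t =
      ∑ j ∈ Finset.range (2 ^ k),
        (-1 : ℝ) ^ j *
          Set.indicator (Set.Ioc ((j : ℝ) / 2 ^ k) ((j + 1 : ℝ) / 2 ^ k))
            (fun _ => (1 : ℝ)) t)

include hF

lemma F_nonneg (x : ℝ) : 0 ≤ F x := by rw [hF]; exact ENNReal.toReal_nonneg

lemma F_le_one (x : ℝ) : F x ≤ 1 := by
  rw [hF]
  rw [← ENNReal.toReal_one]
  apply ENNReal.toReal_mono ENNReal.one_ne_top
  exact prob_le_one

lemma F_monotone : Monotone F := by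
  intro x y hxy
  rw [hF, hF]
  apply ENNReal.toReal_mono (measure_ne_top μ _)
  exact measure_mono (Set.Iic_subset_Iic.2 hxy)

lemma F_measurable : Measurable F := (F_monotone hF).measurable

include hdiff

lemma cdf_Ioc {a b : ℝ} (ha0 : 0 ≤ a) (hab : a ≤ b) (hb1 : b ≤ 1) :
    μ (F ⁻¹' Set.Ioc a b) = ENNReal.ofReal (b - a) := by
  have hmono := F_monotone (μ := μ) hF
  have hsplit : F ⁻¹' Set.Ioc a b = {x | F x ≤ b} \ {x | F x ≤ a} := by
    ext x
    simp only [Set.mem_preimage, Set.mem_Ioc, Set.mem_diff, Set.mem_setOf_eq, not_le]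
    tauto
  have hmeasa : MeasurableSet {x | F x ≤ a} := hmono.measurable measurableSet_Iic
  have hsub : {x | F x ≤ a} ⊆ {x | F x ≤ b} := fun x hx => le_trans hx hab
  rw [hsplit, measure_diff hsub hmeasa.nullMeasurableSet (measure_ne_top μ _),
    cdf_level μ hdiff F hF (le_trans ha0 hab) hb1,
    cdf_level μ hdiff F hF ha0 (le_trans hab hb1)]
  exact (ENNReal.ofReal_sub b ha0).symm

include hr in
lemma meas_biInter_r (S : Finset ℕ) (hS1 : ∀ k ∈ S, 1 ≤ k)
    (ε : ℕ → ℝ) (hε : ∀ k ∈ S, ε k = -1 ∨ ε k = 1) :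
    μ (⋂ k ∈ S, {x | r k (F x) = ε k}) = 2⁻¹ ^ S.card := by
  classical
  rcases S.eq_empty_or_nonempty with rfl | hne
  · simp
  set K := S.sup id with hK
  have hKmem : ∀ k ∈ S, k ≤ K := fun k hk => Finset.le_sup (f := id) hk
  set G := (Finset.range (2 ^ K)).filter
    (fun n => ∀ k ∈ S, (-1:ℝ) ^ (n / 2 ^ (K - k)) = ε k) with hG
  have hset : (⋂ k ∈ S, {x | r k (F x) = ε k})
      = ⋃ n ∈ G, F ⁻¹' Set.Ioc ((n:ℝ)/2^K) (((n:ℝ)+1)/2^K) := by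
    ext x
    simp only [Set.mem_iInter, Set.mem_iUnion, Set.mem_preimage, Set.mem_setOf_eq, hG,
      Finset.mem_filter, Finset.mem_range]
    constructor
    · intro h
      obtain ⟨k₀, hk₀⟩ := hne
      have h0 : 0 < F x := by
        by_contra hpos
        push_neg at hpos
        have hz := r_zero hr (Or.inl hpos) (k := k₀)
        have h2 := h k₀ hk₀
        rcases hε k₀ hk₀ with he | he <;> rw [he] at h2 <;> rw [hz] at h2 <;> norm_num at h2
      obtain ⟨n, hn, hmem⟩ := Ioc_dyadic_exists K h0 (F_le_one hF x)
      refine ⟨n, ⟨⟨hn, fun k hk => ?_⟩, hmem⟩⟩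
      obtain ⟨hb, hsub⟩ := Ioc_dyadic_refine (hKmem k hk) hn
      rw [← r_eval hr hb (hsub hmem)]
      exact h k hk
    · rintro ⟨n, ⟨⟨hn, hsig⟩, hmem⟩⟩ k hk
      obtain ⟨hb, hsub⟩ := Ioc_dyadic_refine (hKmem k hk) hn
      rw [r_eval hr hb (hsub hmem)]
      exact hsig k hk
  rw [hset]
  have hmeas : ∀ n : ℕ, MeasurableSet (F ⁻¹' Set.Ioc ((n:ℝ)/2^K) (((n:ℝ)+1)/2^K)) :=
    fun n => F_measurable hF measurableSet_Ioc
  have hdisj : (↑G : Set ℕ).PairwiseDisjoint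
      (fun n : ℕ => F ⁻¹' Set.Ioc ((n:ℝ)/2^K) (((n:ℝ)+1)/2^K)) := by
    intro a _ b _ hab
    apply Set.disjoint_left.2
    intro x hxa hxb
    exact hab (Ioc_dyadic_uniq hxa hxb)
  rw [measure_biUnion_finset hdisj (fun n _ => hmeas n)]
  have hterm : ∀ n ∈ G, μ (F ⁻¹' Set.Ioc ((n:ℝ)/2^K) (((n:ℝ)+1)/2^K))
      = ENNReal.ofReal ((1:ℝ)/2^K) := by
    intro n hnG
    have hn : n < 2 ^ K := Finset.mem_range.1 (Finset.mem_filter.1 hnG).1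
    have hpK : (0:ℝ) < 2 ^ K := by positivity
    have h1 : (0:ℝ) ≤ (n:ℝ)/2^K := by positivity
    have h2 : (n:ℝ)/2^K ≤ ((n:ℝ)+1)/2^K := by gcongr <;> linarith
    have h3 : ((n:ℝ)+1)/2^K ≤ 1 := by
      rw [div_le_one hpK]
      have hc : ((n+1 : ℕ):ℝ) ≤ ((2^K : ℕ):ℝ) := Nat.cast_le.2 hn
      push_cast at hc
      linarith
    rw [cdf_Ioc hdiff hF h1 h2 h3]
    congr 1
    field_simp
    ring
  rw [Finset.sum_congr rfl hterm, Finset.sum_const]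
  have hcount : G.card = 2 ^ (K - S.card) := by
    have hKk : ∀ k ∈ S, K - k < K := fun k hk => by
      have h1 := hS1 k hk; have h2 := hKmem k hk; omega
    have himg : ∀ m ∈ S.image (fun k => K - k), m < K := by
      intro m hm
      obtain ⟨k, hk, rfl⟩ := Finset.mem_image.1 hm
      exact hKk k hk
    set T : Finset (Fin K) := (S.image (fun k => K - k)).attachFin himg with hT
    set q : Fin K → Fin 2 := fun i => if ε (K - (i:ℕ)) = 1 then 0 else 1 with hq
    have hqval : ∀ i : Fin K, (q i : ℕ) = if ε (K - (i:ℕ)) = 1 then 0 else 1 := by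
      intro i
      rw [hq]
      by_cases h : ε (K - (i:ℕ)) = 1 <;> simp [h]
    have hGT : G = (Finset.range (2 ^ K)).filter
        (fun n => ∀ i ∈ T, n / 2 ^ (i:ℕ) % 2 = (q i : ℕ)) := by
      rw [hG]
      apply Finset.filter_congr
      intro n _
      constructor
      · intro h i hi
        rw [hT, Finset.mem_attachFin] at hi
        obtain ⟨k, hk, hik⟩ := Finset.mem_image.1 hi
        have hkK := hKmem k hk
        have h1k := hS1 k hk
        have hsig := h k hk
        rw [neg_one_pow_eq_iff_mod _ (hε k hk)] at hsig
        rw [hqval]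
        have hKik : K - (i:ℕ) = k := by omega
        rw [hKik]
        rw [← hik]
        exact hsig
      · intro h k hk
        have hkK := hKmem k hk
        have h1k := hS1 k hk
        have hi : (⟨K - k, hKk k hk⟩ : Fin K) ∈ T := by
          rw [hT, Finset.mem_attachFin]
          exact Finset.mem_image.2 ⟨k, hk, rfl⟩
        have := h _ hi
        rw [hqval] at this
        have hKik : K - (K - k) = k := by omega
        rw [hKik] at this
        rw [neg_one_pow_eq_iff_mod _ (hε k hk)]
        exact this
    rw [hGT, count_fixed_bits]
    congr 1
    rw [hT, Finset.card_attachFin, Finset.card_image_of_injOn]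
    intro a ha b hb hab
    have h1 := hKmem a ha
    have h2 := hKmem b hb
    have hab' : K - a = K - b := hab
    omega
  rw [hcount]
  have hsK : S.card ≤ K := by
    have hsub : S ⊆ Finset.Icc 1 K := fun k hk =>
      Finset.mem_Icc.2 ⟨hS1 k hk, hKmem k hk⟩
    have := Finset.card_le_card hsub
    rwa [Nat.card_Icc, Nat.add_sub_cancel] at this
  have hofn : ENNReal.ofReal ((1:ℝ)/2^K) = (2⁻¹ : ENNReal) ^ K := by
    rw [one_div, ENNReal.ofReal_inv_of_pos (by positivity), ← ENNReal.inv_pow]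
    congr 1
    rw [ENNReal.ofReal_pow (by norm_num)]
    norm_num
  rw [hofn, nsmul_eq_mul]
  have hcast : ((2 ^ (K - S.card) : ℕ) : ENNReal) = (2 : ENNReal) ^ (K - S.card) := by
    push_cast
    rfl
  rw [hcast]
  have h2 : (2:ENNReal) * 2⁻¹ = 1 := ENNReal.mul_inv_cancel (by norm_num) (by norm_num)
  calc (2:ENNReal) ^ (K - S.card) * 2⁻¹ ^ K
      = 2 ^ (K - S.card) * (2⁻¹ ^ (K - S.card) * 2⁻¹ ^ S.card) := by
        have hKs : K - S.card + S.card = K := by omega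
        rw [← pow_add, hKs]
    _ = (2 * 2⁻¹) ^ (K - S.card) * 2⁻¹ ^ S.card := by rw [mul_pow]; ring
    _ = 2⁻¹ ^ S.card := by rw [h2, one_pow, one_mul]

end main


section final

variable {μ : Measure ℝ} [IsProbabilityMeasure μ]
  (hdiff : ∀ x : ℝ, μ {x} = 0)
  {F : ℝ → ℝ} (hF : ∀ x, F x = (μ (Set.Iic x)).toReal)
  {r : ℕ → ℝ → ℝ}
  (hr : ∀ k t, r k t =
      ∑ j ∈ Finset.range (2 ^ k),
        (-1 : ℝ) ^ j *
          Set.indicator (Set.Ioc ((j : ℝ) / 2 ^ k) ((j + 1 : ℝ) / 2 ^ k))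
            (fun _ => (1 : ℝ)) t)

include hdiff hF hr

lemma meas_single {k : ℕ} (hk : 1 ≤ k) {e : ℝ} (he : e = -1 ∨ e = 1) :
    μ {x | r k (F x) = e} = 2⁻¹ := by
  have h := meas_biInter_r hdiff hF hr {k} (by simpa using hk)
    (fun _ => e) (fun _ _ => he)
  simpa using h

omit hdiff in
lemma r_measurable (k : ℕ) : Measurable (fun x => r k (F x)) := by
  have h1 : Measurable (r k) := by
    have heq : r k = fun t => ∑ j ∈ Finset.range (2 ^ k),
        (-1 : ℝ) ^ j *
          Set.indicator (Set.Ioc ((j : ℝ) / 2 ^ k) ((j + 1 : ℝ) / 2 ^ k))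
            (fun _ => (1 : ℝ)) t := funext fun t => hr k t
    rw [heq]
    apply Finset.measurable_sum
    intro j _
    exact (measurable_const.indicator measurableSet_Ioc).const_mul _
  exact h1.comp (F_measurable hF)

omit hdiff in
lemma r_tri (k : ℕ) (x : ℝ) :
    r k (F x) = -1 ∨ r k (F x) = 0 ∨ r k (F x) = 1 := by
  rcases le_or_gt (F x) 0 with h | h
  · exact Or.inr (Or.inl (r_zero hr (Or.inl h)))
  · obtain ⟨j, hj, hmem⟩ := Ioc_dyadic_exists k h (F_le_one hF x)
    rw [r_eval hr hj hmem]
    rcases Nat.even_or_odd j with hJ | hJ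
    · rw [hJ.neg_one_pow]; right; right; rfl
    · rw [hJ.neg_one_pow]; left; rfl

omit hdiff in
lemma comap_eq (k : ℕ) :
    MeasurableSpace.comap (fun x => r k (F x)) (inferInstance : MeasurableSpace ℝ)
      = MeasurableSpace.generateFrom
        ({{x | r k (F x) = -1}, {x | r k (F x) = 1}} : Set (Set ℝ)) := by
  classical
  apply le_antisymm
  · rintro s ⟨s', hs', rfl⟩
    have hkey : (fun x => r k (F x)) ⁻¹' s' =
        ((if (-1:ℝ) ∈ s' then {x | r k (F x) = -1} else ∅) ∪
          (if (1:ℝ) ∈ s' then {x | r k (F x) = 1} else ∅)) ∪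
          (if (0:ℝ) ∈ s' then ({x | r k (F x) = -1} ∪ {x | r k (F x) = 1})ᶜ else ∅) := by
      ext x
      simp only [Set.mem_preimage, Set.mem_union, Set.mem_compl_iff, Set.mem_setOf_eq,
        Set.mem_empty_iff_false]
      rcases r_tri hF hr k x with h | h | h <;>
        by_cases hm1 : (-1:ℝ) ∈ s' <;>
        by_cases hm0 : (0:ℝ) ∈ s' <;>
        by_cases hp1 : (1:ℝ) ∈ s' <;>
        norm_num [h, hm1, hm0, hp1]
    rw [hkey]
    have hb1 : MeasurableSet[MeasurableSpace.generateFrom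
        ({{x | r k (F x) = -1}, {x | r k (F x) = 1}} : Set (Set ℝ))] {x | r k (F x) = -1} :=
      MeasurableSpace.measurableSet_generateFrom (Set.mem_insert _ _)
    have hb2 : MeasurableSet[MeasurableSpace.generateFrom
        ({{x | r k (F x) = -1}, {x | r k (F x) = 1}} : Set (Set ℝ))] {x | r k (F x) = 1} :=
      MeasurableSpace.measurableSet_generateFrom (Set.mem_insert_of_mem _ rfl)
    have hemp : MeasurableSet[MeasurableSpace.generateFrom
        ({{x | r k (F x) = -1}, {x | r k (F x) = 1}} : Set (Set ℝ))] (∅ : Set ℝ) :=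
      @MeasurableSet.empty _ (MeasurableSpace.generateFrom _)
    apply MeasurableSet.union
    · apply MeasurableSet.union <;> split_ifs <;>
        first
          | exact hb1
          | exact hb2
          | exact hemp
    · split_ifs
      · exact (hb1.union hb2).compl
      · exact hemp
  · apply MeasurableSpace.generateFrom_le
    rintro t ht
    simp only [Set.mem_insert_iff, Set.mem_singleton_iff] at ht
    rcases ht with rfl | rfl
    · exact ⟨{-1}, measurableSet_singleton _, by ext x; simp⟩
    · exact ⟨{1}, measurableSet_singleton _, by ext x; simp⟩

lemma Ev_ne {k : ℕ} (hk : 1 ≤ k) :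
    ({x | r k (F x) = -1} : Set ℝ) ≠ {x | r k (F x) = 1} := by
  intro heq
  have hempty : ({x | r k (F x) = 1} : Set ℝ) = ∅ := by
    ext x
    simp only [Set.mem_setOf_eq, Set.mem_empty_iff_false, iff_false]
    intro h1
    have hx : x ∈ {x | r k (F x) = -1} := by rw [heq]; exact h1
    have h2 : r k (F x) = -1 := hx
    rw [h1] at h2
    norm_num at h2
  have hm := meas_single hdiff hF hr hk (Or.inr rfl)
  rw [hempty, measure_empty] at hm
  have hne : (2:ENNReal)⁻¹ ≠ 0 := ENNReal.inv_ne_zero.2 (by norm_num)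
  exact hne hm.symm

end final


open ProbabilityTheory in
/-- If `μ` is an atomless probability measure on `ℝ` with cdf `F`,
and `r k` is the `k`-th Rademacher function
`r k t = ∑_{j<2^k} (-1)^j · 1_{(j/2^k, (j+1)/2^k]}(t)`, then the sequence
`(r k ∘ F)_{k ≥ 1}` is mutually independent on `(ℝ, B(ℝ), μ)`, and each
`r k ∘ F` takes each of the values `±1` with probability `1/2`. -/
theorem stmt_1 (μ : Measure ℝ) [IsProbabilityMeasure μ]
    (hdiff : ∀ x : ℝ, μ {x} = 0)
    (F : ℝ → ℝ) (hF : ∀ x, F x = (μ (Set.Iic x)).toReal)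
    (r : ℕ → ℝ → ℝ)
    (hr : ∀ k t, r k t =
      ∑ j ∈ Finset.range (2 ^ k),
        (-1 : ℝ) ^ j *
          Set.indicator (Set.Ioc ((j : ℝ) / 2 ^ k) ((j + 1 : ℝ) / 2 ^ k))
            (fun _ => (1 : ℝ)) t) :
    ProbabilityTheory.iIndepFun (m := fun _ : ℕ => (inferInstance : MeasurableSpace ℝ))
      (fun k => r (k + 1) ∘ F) μ ∧
    ∀ k : ℕ, 1 ≤ k → ∀ ε : ℝ, ε = -1 ∨ ε = 1 →
      μ {x | r k (F x) = ε} = ENNReal.ofReal (1 / 2) := by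
  constructor
  · -- independence
    classical
    rw [ProbabilityTheory.iIndepFun_iff_iIndep]
    apply ProbabilityTheory.iIndepSets.iIndep
      (π := fun i => ({{x | r (i+1) (F x) = -1}, {x | r (i+1) (F x) = 1}} : Set (Set ℝ)))
    · intro i
      exact measurable_iff_comap_le.1 (r_measurable hF hr (i+1))
    · intro i
      intro s hs t ht hst
      simp only [Set.mem_insert_iff, Set.mem_singleton_iff] at hs ht
      rcases hs with rfl | rfl <;> rcases ht with rfl | rfl
      · rw [Set.inter_self]; exact Set.mem_insert _ _
      · exfalso
        obtain ⟨x, hx1, hx2⟩ := hst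
        simp only [Set.mem_setOf_eq] at hx1 hx2
        rw [hx1] at hx2; norm_num at hx2
      · exfalso
        obtain ⟨x, hx1, hx2⟩ := hst
        simp only [Set.mem_setOf_eq] at hx1 hx2
        rw [hx1] at hx2; norm_num at hx2
      · rw [Set.inter_self]; exact Set.mem_insert_of_mem _ rfl
    · exact fun i => comap_eq hF hr (i+1)
    · rw [ProbabilityTheory.iIndepSets_iff]
      intro s f hf
      set εc : ℕ → ℝ := fun i => if f i = {x | r (i+1) (F x) = 1} then 1 else -1 with hεc
      have hεval : ∀ i, εc i = -1 ∨ εc i = 1 := by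
        intro i
        rw [hεc]
        by_cases h : f i = {x | r (i+1) (F x) = 1} <;> simp [h]
      have hfi : ∀ i ∈ s, f i = {x | r (i+1) (F x) = εc i} := by
        intro i hi
        rcases hf i hi with h | h
        · have hne : f i ≠ {x | r (i+1) (F x) = 1} := by
            rw [h]
            exact Ev_ne hdiff hF hr (Nat.le_add_left 1 i)
          rw [hεc]
          simp only [hne, if_false]
          exact h
        · rw [Set.mem_singleton_iff] at h
          rw [hεc]
          simp [h]
      have hLHS : (⋂ i ∈ s, f i)
          = ⋂ k ∈ s.image (fun i => i + 1), {x | r k (F x) = εc (k - 1)} := by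
        ext x
        simp only [Set.mem_iInter, Finset.mem_image]
        constructor
        · rintro h k ⟨i, hi, rfl⟩
          have hx := h i hi
          rw [hfi i hi] at hx
          simpa using hx
        · intro h i hi
          rw [hfi i hi]
          have hx := h (i+1) ⟨i, hi, rfl⟩
          simpa using hx
      rw [hLHS, meas_biInter_r hdiff hF hr _
        (by intro k hk; obtain ⟨i, _, rfl⟩ := Finset.mem_image.1 hk; omega)
        _ (by intro k hk; exact hεval (k-1))]
      rw [Finset.card_image_of_injective _ (fun a b hab => by omega)]
      have hprod : ∀ i ∈ s, μ (f i) = 2⁻¹ := by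
        intro i hi
        rw [hfi i hi]
        exact meas_single hdiff hF hr (Nat.le_add_left 1 i) (hεval i)
      rw [Finset.prod_congr rfl hprod, Finset.prod_const]
  · intro k hk ε hε
    have h := meas_single hdiff hF hr hk hε
    rw [h]
    rw [one_div, ENNReal.ofReal_inv_of_pos (by norm_num)]
    norm_num
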